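/- The Kahan map is a Poisson map for the quadratic bracket in u-coordinates: if ũ_j = u_j(1+εH)/(1−εH+2ε u_j) with H = u_m, then for i < j, ∑ over the bracket relations gives {ũ_i, ũ_j} = ũ_i(ũ_j − ũ_i), where {u_i, u_j} = u_i(u_j − u_i) for i < j. -/

import Mathlib

/-- The Poisson bracket in the coordinates `u`, determined by `{u_a, u_b} = u_a (u_b − u_a)`
for `a < b`: `{F,G}(u) = ∑_{a<b} u_a (u_b − u_a)(∂_a F ∂_b G − ∂_b F ∂_a G)`. -/
noncomputable def ubracket {n : ℕ} (F G : (Fin n → ℝ) → ℝ) (u : Fin n → ℝ) : ℝ :=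
  ∑ a : Fin n, ∑ b ∈ Finset.univ.filter (fun b => a < b),
    u a * (u b - u a) * (fderiv ℝ F u (Pi.single a 1) * fderiv ℝ G u (Pi.single b 1)
      - fderiv ℝ F u (Pi.single b 1) * fderiv ℝ G u (Pi.single a 1))

lemma fderiv_kahan (m : ℕ) (ε : ℝ) (k a : Fin (m+1)) (u : Fin (m+1) → ℝ)
    (hk : 1 - ε * u (Fin.last m) + 2 * ε * u k ≠ 0) :
    fderiv ℝ (fun v : Fin (m+1) → ℝ =>
        v k * (1 + ε * v (Fin.last m)) / (1 - ε * v (Fin.last m) + 2 * ε * v k)) u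
        (Pi.single a 1)
    = ((1 - ε * u (Fin.last m) + 2 * ε * u k) *
        ((if a = k then 1 + ε * u (Fin.last m) else 0) + (if a = Fin.last m then ε * u k else 0))
      - u k * (1 + ε * u (Fin.last m)) *
        ((if a = Fin.last m then -ε else 0) + (if a = k then 2 * ε else 0)))
      / (1 - ε * u (Fin.last m) + 2 * ε * u k) ^ 2 := by
  have hpk : HasFDerivAt (fun v : Fin (m+1) → ℝ => v k)
      (ContinuousLinearMap.proj (R := ℝ) (φ := fun _ : Fin (m+1) => ℝ) k) u :=
    hasFDerivAt_apply k u
  have hpl : HasFDerivAt (fun v : Fin (m+1) → ℝ => v (Fin.last m))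
      (ContinuousLinearMap.proj (R := ℝ) (φ := fun _ : Fin (m+1) => ℝ) (Fin.last m)) u :=
    hasFDerivAt_apply (Fin.last m) u
  have hN := hpk.mul ((hpl.const_mul ε).const_add 1)
  have hD := ((hpl.const_mul ε).const_sub 1).add (hpk.const_mul (2*ε))
  have hI := (hasDerivAt_inv hk).comp_hasFDerivAt u hD
  have h2 : fderiv ℝ (fun v : Fin (m+1) → ℝ =>
      v k * (1 + ε * v (Fin.last m)) / (1 - ε * v (Fin.last m) + 2 * ε * v k)) u = _ :=
    HasFDerivAt.fderiv (by exact hN.mul hI)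
  rw [h2]
  simp only [ContinuousLinearMap.smul_apply, ContinuousLinearMap.add_apply,
    ContinuousLinearMap.sub_apply, ContinuousLinearMap.neg_apply, ContinuousLinearMap.coe_smul',
    Pi.smul_apply, ContinuousLinearMap.proj_apply, Pi.single_apply, smul_eq_mul,
    Function.comp_apply, Pi.mul_apply]
  rcases eq_or_ne a k with rfl | h1 <;> rcases eq_or_ne a (Fin.last m) with rfl | h2
  · simp only [if_pos rfl, ↓reduceIte]; field_simp; ring
  · simp only [if_pos rfl, ↓reduceIte, if_neg h2, if_neg (Ne.symm h2)]; field_simp; ring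
  · simp only [if_pos rfl, ↓reduceIte, if_neg h1, if_neg (Ne.symm h1)]; field_simp; ring
  · simp only [if_neg h1, if_neg (Ne.symm h1), if_neg h2, if_neg (Ne.symm h2)]; simp

lemma sum_reduce {n : ℕ} (s : Finset (Fin n)) (T : Fin n → Fin n → ℝ)
    (hT : ∀ a b : Fin n, a ∉ s ∨ b ∉ s → T a b = 0) :
    (∑ a : Fin n, ∑ b ∈ Finset.univ.filter (fun b => a < b), T a b)
      = ∑ a ∈ s, ∑ b ∈ s, if a < b then T a b else 0 := by
  have h1 : (∑ a : Fin n, ∑ b ∈ Finset.univ.filter (fun b => a < b), T a b)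
      = ∑ a : Fin n, ∑ b : Fin n, if a < b then T a b else 0 :=
    Finset.sum_congr rfl fun a _ => Finset.sum_filter _ _
  rw [h1,
    ← Finset.sum_subset (Finset.subset_univ s) (fun a _ ha => Finset.sum_eq_zero fun b _ => by
      simp [hT a b (Or.inl ha)])]
  exact Finset.sum_congr rfl fun a _ =>
    (Finset.sum_subset (Finset.subset_univ s) fun b _ hb => by simp [hT a b (Or.inr hb)]).symm

/-- the Kahan map `ũ_j = u_j (1+εH)/(1−εH+2εu_j)` (with `H = u_m`, the last
coordinate) is a Poisson map: for `i < j`, `{ũ_i, ũ_j} = ũ_i (ũ_j − ũ_i)`. -/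
theorem kahan_is_poisson (m : ℕ) (ε : ℝ) (i j : Fin (m + 1)) (hij : i < j)
    (u : Fin (m + 1) → ℝ)
    (hden : ∀ k : Fin (m + 1), 1 - ε * u (Fin.last m) + 2 * ε * u k ≠ 0) :
    ubracket
      (fun v => v i * (1 + ε * v (Fin.last m)) / (1 - ε * v (Fin.last m) + 2 * ε * v i))
      (fun v => v j * (1 + ε * v (Fin.last m)) / (1 - ε * v (Fin.last m) + 2 * ε * v j)) u
      = (u i * (1 + ε * u (Fin.last m)) / (1 - ε * u (Fin.last m) + 2 * ε * u i)) *
        ((u j * (1 + ε * u (Fin.last m)) / (1 - ε * u (Fin.last m) + 2 * ε * u j))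
          - u i * (1 + ε * u (Fin.last m)) / (1 - ε * u (Fin.last m) + 2 * ε * u i)) := by
  have hil : i < Fin.last m := lt_of_lt_of_le hij (Fin.le_last j)
  rw [ubracket]
  rcases lt_or_eq_of_le (Fin.le_last j) with h | h
  · -- j < last
    rw [sum_reduce ({i, j, Fin.last m} : Finset (Fin (m+1)))
        (fun a b => u a * (u b - u a) *
          (fderiv ℝ (fun v => v i * (1 + ε * v (Fin.last m)) /
              (1 - ε * v (Fin.last m) + 2 * ε * v i)) u (Pi.single a 1) *
            fderiv ℝ (fun v => v j * (1 + ε * v (Fin.last m)) /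
              (1 - ε * v (Fin.last m) + 2 * ε * v j)) u (Pi.single b 1)
          - fderiv ℝ (fun v => v i * (1 + ε * v (Fin.last m)) /
              (1 - ε * v (Fin.last m) + 2 * ε * v i)) u (Pi.single b 1) *
            fderiv ℝ (fun v => v j * (1 + ε * v (Fin.last m)) /
              (1 - ε * v (Fin.last m) + 2 * ε * v j)) u (Pi.single a 1)))
        (by
          intro a b hab
          rcases hab with ha | hb
          · simp only [Finset.mem_insert, Finset.mem_singleton, not_or] at ha
            obtain ⟨h1, h2, h3⟩ := ha
            rw [fderiv_kahan m ε i a u (hden i), fderiv_kahan m ε j a u (hden j)]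
            simp [h1, h2, h3]
          · simp only [Finset.mem_insert, Finset.mem_singleton, not_or] at hb
            obtain ⟨h1, h2, h3⟩ := hb
            rw [fderiv_kahan m ε i b u (hden i), fderiv_kahan m ε j b u (hden j)]
            simp [h1, h2, h3])]
    have hexp : ∀ f : Fin (m+1) → ℝ, (∑ x ∈ ({i, j, Fin.last m} : Finset (Fin (m+1))), f x)
        = f i + (f j + f (Fin.last m)) := by
      intro f
      rw [Finset.sum_insert (by simp [hij.ne, hil.ne]),
        Finset.sum_insert (by simp [h.ne]), Finset.sum_singleton]
    rw [hexp, hexp, hexp, hexp]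
    rw [if_pos hij, if_pos hil, if_pos h, if_neg (lt_irrefl i), if_neg (lt_irrefl j),
      if_neg (lt_irrefl (Fin.last m)), if_neg (asymm hij), if_neg (asymm hil), if_neg (asymm h)]
    rw [fderiv_kahan m ε i i u (hden i), fderiv_kahan m ε i j u (hden i),
      fderiv_kahan m ε i (Fin.last m) u (hden i), fderiv_kahan m ε j i u (hden j),
      fderiv_kahan m ε j j u (hden j), fderiv_kahan m ε j (Fin.last m) u (hden j)]
    simp only [if_pos rfl, ↓reduceIte, if_neg hij.ne, if_neg hij.ne', if_neg hil.ne, if_neg hil.ne',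
      if_neg h.ne, if_neg h.ne']
    have d1 := hden i
    have d2 := hden j
    have d1' : 1 - ε * u (Fin.last m) + u i * ε * 2 ≠ 0 := by convert d1 using 1; ring
    have d2' : 1 - ε * u (Fin.last m) + u j * ε * 2 ≠ 0 := by convert d2 using 1; ring
    field_simp
    ring
  · -- j = last
    subst h
    rw [sum_reduce ({i, Fin.last m} : Finset (Fin (m+1)))
        (fun a b => u a * (u b - u a) *
          (fderiv ℝ (fun v => v i * (1 + ε * v (Fin.last m)) /
              (1 - ε * v (Fin.last m) + 2 * ε * v i)) u (Pi.single a 1) *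
            fderiv ℝ (fun v => v (Fin.last m) * (1 + ε * v (Fin.last m)) /
              (1 - ε * v (Fin.last m) + 2 * ε * v (Fin.last m))) u (Pi.single b 1)
          - fderiv ℝ (fun v => v i * (1 + ε * v (Fin.last m)) /
              (1 - ε * v (Fin.last m) + 2 * ε * v i)) u (Pi.single b 1) *
            fderiv ℝ (fun v => v (Fin.last m) * (1 + ε * v (Fin.last m)) /
              (1 - ε * v (Fin.last m) + 2 * ε * v (Fin.last m))) u (Pi.single a 1)))
        (by
          intro a b hab
          rcases hab with ha | hb
          · simp only [Finset.mem_insert, Finset.mem_singleton, not_or] at ha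
            obtain ⟨h1, h2⟩ := ha
            rw [fderiv_kahan m ε i a u (hden i),
              fderiv_kahan m ε (Fin.last m) a u (hden (Fin.last m))]
            simp [h1, h2]
          · simp only [Finset.mem_insert, Finset.mem_singleton, not_or] at hb
            obtain ⟨h1, h2⟩ := hb
            rw [fderiv_kahan m ε i b u (hden i),
              fderiv_kahan m ε (Fin.last m) b u (hden (Fin.last m))]
            simp [h1, h2])]
    have hexp : ∀ f : Fin (m+1) → ℝ, (∑ x ∈ ({i, Fin.last m} : Finset (Fin (m+1))), f x)
        = f i + f (Fin.last m) := by
      intro f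
      rw [Finset.sum_insert (by simp [hil.ne]), Finset.sum_singleton]
    rw [hexp, hexp, hexp]
    rw [if_pos hil, if_neg (lt_irrefl i), if_neg (lt_irrefl (Fin.last m)), if_neg (asymm hil)]
    rw [fderiv_kahan m ε i i u (hden i), fderiv_kahan m ε i (Fin.last m) u (hden i),
      fderiv_kahan m ε (Fin.last m) i u (hden (Fin.last m)),
      fderiv_kahan m ε (Fin.last m) (Fin.last m) u (hden (Fin.last m))]
    simp only [if_pos rfl, ↓reduceIte, if_neg hil.ne, if_neg hil.ne']
    have d1 := hden i
    have d2 := hden (Fin.last m)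
    have d1' : 1 - u (Fin.last m) * ε + u i * ε * 2 ≠ 0 := by convert d1 using 1; ring
    have d2' : 1 + u (Fin.last m) * ε ≠ 0 := by convert d2 using 1; ring
    have d2'' : 1 - u (Fin.last m) * ε + u (Fin.last m) * ε * 2 ≠ 0 := by convert d2 using 1; ring
    field_simp
    ring
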